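/- Let K be a field and q ∈ K with q ≠ 0 and q² ≠ 1. Define [m] := (q^m − q^{−m})/(q − q^{−1}) for m ∈ ℤ. Let ℓ, n be integers with ℓ ≥ n ≥ 1. Then Σ_{w ∈ S_n} ∏_{t=1}^{n} ( [ℓ − 2·|J_w^{<t}|] · q^{ℓ−2t+1} ) = ( ∏_{k=1}^{n} (q^{−2k} − 1)/(q^{−2} − 1) ) · ( ∏_{t=1}^{n} (1 + q^{2} + ⋯ + q^{2(ℓ−t)}) ). (This identity is the graded dimension formula for the cyclotomic nilHecke algebra H^{(0)}_{ℓ,n} of Corollary 3.10, expressed as a pure q-identity.) -/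

import Mathlib

open Finset Equiv

private def nhExt {n : ℕ} (σ : Equiv.Perm (Fin n)) (k : Fin (n + 1)) : Equiv.Perm (Fin (n + 1)) :=
  finSuccEquivLast.trans (σ.optionCongr.trans (finSuccEquiv' k).symm)

private lemma nhExt_castSucc {n : ℕ} (σ : Equiv.Perm (Fin n)) (k : Fin (n + 1)) (j : Fin n) :
    nhExt σ k (Fin.castSucc j) = k.succAbove (σ j) := by
  simp [nhExt]

private lemma nhExt_last {n : ℕ} (σ : Equiv.Perm (Fin n)) (k : Fin (n + 1)) :
    nhExt σ k (Fin.last n) = k := by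
  simp [nhExt]

private lemma nhExt_bij (n : ℕ) :
    Function.Bijective (fun p : Equiv.Perm (Fin n) × Fin (n + 1) => nhExt p.1 p.2) := by
  rw [Fintype.bijective_iff_injective_and_card]
  constructor
  · rintro ⟨σ₁, k₁⟩ ⟨σ₂, k₂⟩ h
    have hk : k₁ = k₂ := by
      have := DFunLike.congr_fun h (Fin.last n)
      simpa [nhExt_last] using this
    subst hk
    have hσ : σ₁ = σ₂ := Equiv.ext fun j => Fin.succAbove_right_injective (by
      have := DFunLike.congr_fun h (Fin.castSucc j)
      rwa [nhExt_castSucc, nhExt_castSucc] at this)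
    simp [hσ]
  · simp [Fintype.card_perm, Nat.factorial_succ]; ring

private lemma card_castSucc_lt (n : ℕ) (k : Fin (n + 1)) :
    (univ.filter fun m : Fin n => Fin.castSucc m < k).card = k :=
  calc (univ.filter fun m : Fin n => Fin.castSucc m < k).card
      = (Finset.range (k : ℕ)).card := by
        refine Finset.card_bij (fun m _ => (m : ℕ)) ?_ ?_ ?_
        · intro m hm
          simp only [mem_filter, mem_univ, true_and, Fin.lt_def, Fin.coe_castSucc] at hm
          simpa only [Finset.mem_range] using hm
        · intro a _ b _ hab
          exact Fin.val_injective hab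
        · intro b hb
          simp only [Finset.mem_range] at hb
          have hbn : b < n := lt_of_lt_of_le hb (Nat.lt_succ_iff.mp k.isLt)
          exact ⟨⟨b, hbn⟩, by simp [Fin.lt_def, hb], rfl⟩
    _ = k := Finset.card_range _

private lemma stat_last {n : ℕ} (σ : Equiv.Perm (Fin n)) (k : Fin (n + 1)) :
    (univ.filter fun j : Fin (n + 1) =>
        j < Fin.last n ∧ nhExt σ k j < nhExt σ k (Fin.last n)).card = k :=
  calc (univ.filter fun j : Fin (n + 1) =>
        j < Fin.last n ∧ nhExt σ k j < nhExt σ k (Fin.last n)).card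
      = (univ.filter fun m : Fin n => Fin.castSucc m < k).card := by
        refine (Finset.card_bij (fun m _ => Fin.castSucc (σ.symm m)) ?_ ?_ ?_).symm
        · intro m hm
          simp only [mem_filter, mem_univ, true_and] at hm ⊢
          refine ⟨Fin.castSucc_lt_last _, ?_⟩
          rw [nhExt_castSucc, nhExt_last, Equiv.apply_symm_apply]
          exact (Fin.succAbove_lt_iff_castSucc_lt k m).mpr hm
        · intro a _ b _ hab
          exact σ.symm.injective (Fin.castSucc_injective _ hab)
        · intro j hj
          simp only [mem_filter, mem_univ, true_and] at hj
          obtain ⟨hjlt, hw⟩ := hj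
          obtain ⟨j', rfl⟩ := Fin.eq_castSucc_of_ne_last (Fin.ne_last_of_lt hjlt)
          rw [nhExt_castSucc, nhExt_last] at hw
          refine ⟨σ j', ?_, by simp⟩
          simp only [mem_filter, mem_univ, true_and]
          exact (Fin.succAbove_lt_iff_castSucc_lt k (σ j')).mp hw
    _ = k := card_castSucc_lt n k

private lemma stat_castSucc {n : ℕ} (σ : Equiv.Perm (Fin n)) (k : Fin (n + 1)) (t : Fin n) :
    (univ.filter fun j : Fin (n + 1) =>
        j < Fin.castSucc t ∧ nhExt σ k j < nhExt σ k (Fin.castSucc t)).card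
      = (univ.filter fun j : Fin n => j < t ∧ σ j < σ t).card := by
  refine (Finset.card_bij (fun j _ => Fin.castSucc j) ?_ ?_ ?_).symm
  · intro j hj
    simp only [mem_filter, mem_univ, true_and] at hj ⊢
    rw [nhExt_castSucc, nhExt_castSucc]
    exact ⟨Fin.castSucc_lt_castSucc_iff.mpr hj.1,
      Fin.succAbove_lt_succAbove_iff.mpr hj.2⟩
  · intro a _ b _ hab
    exact Fin.castSucc_injective _ hab
  · intro j hj
    simp only [mem_filter, mem_univ, true_and] at hj
    obtain ⟨hjlt, hw⟩ := hj
    obtain ⟨j', rfl⟩ := Fin.eq_castSucc_of_ne_last (Fin.ne_last_of_lt hjlt)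
    rw [nhExt_castSucc, nhExt_castSucc] at hw
    refine ⟨j', ?_, rfl⟩
    simp only [mem_filter, mem_univ, true_and]
    exact ⟨Fin.castSucc_lt_castSucc_iff.mp hjlt,
      Fin.succAbove_lt_succAbove_iff.mp hw⟩

private lemma nh_key {K : Type*} [Field K] (f : ℕ → ℕ → K) : ∀ n : ℕ,
    ∑ w : Equiv.Perm (Fin n), ∏ t : Fin n,
        f (t : ℕ) ((univ.filter fun j => j < t ∧ w j < w t)).card
      = ∏ t ∈ Finset.range n, ∑ c ∈ Finset.range (t + 1), f t c := by
  intro n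
  induction n with
  | zero => simp
  | succ n ih =>
    rw [← (Fintype.sum_bijective _ (nhExt_bij n)
      (fun p : Equiv.Perm (Fin n) × Fin (n + 1) =>
        (∏ t : Fin n, f (t : ℕ) ((univ.filter fun j => j < t ∧ p.1 j < p.1 t)).card)
          * f n (p.2 : ℕ))
      _ ?_)]
    · rw [Fintype.sum_prod_type]
      dsimp only
      rw [← Finset.sum_mul_sum (f := fun x : Perm (Fin n) => ∏ t : Fin n, f (t : ℕ) ((univ.filter fun j => j < t ∧ x j < x t)).card) (g := fun y : Fin (n + 1) => f n y), Finset.prod_range_succ, ← ih]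
      congr 1
      rw [← Fin.sum_univ_eq_sum_range (fun c => f n c) (n + 1)]
    · rintro ⟨σ, k⟩
      dsimp only
      rw [Fin.prod_univ_castSucc, Fin.val_last, stat_last]
      congr 1
      refine Finset.prod_congr rfl fun t _ => ?_
      rw [Fin.coe_castSucc, stat_castSucc]

private lemma nh_term {K : Type*} [Field K] (q : K) (hq : q ≠ 0) (hq2 : q ^ 2 ≠ 1)
    (l t : ℕ) (ht : t < l) :
    ∑ c ∈ Finset.range (t + 1),
        ((q ^ ((l : ℤ) - 2 * (c : ℤ)) - q ^ (-((l : ℤ) - 2 * (c : ℤ)))) / (q - q⁻¹))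
          * q ^ ((l : ℤ) - 2 * (t : ℤ) - 1)
      = (q ^ (-(2 * ((t : ℤ) + 1))) - 1) / (q ^ (-2 : ℤ) - 1)
          * ∑ j ∈ Finset.range (l - t), q ^ (2 * j) := by
  have hy0 : (q ^ 2 : K) ≠ 0 := pow_ne_zero _ hq
  have hy1' : (q ^ 2 : K) - 1 ≠ 0 := sub_ne_zero.mpr hq2
  have hXt : ((q ^ 2) ^ t : K) ≠ 0 := pow_ne_zero _ hy0
  have hXt1 : ((q ^ 2) ^ (t + 1) : K) ≠ 0 := pow_ne_zero _ hy0
  have hql : (q ^ l : K) ≠ 0 := pow_ne_zero _ hq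
  have hqq : q - q⁻¹ ≠ 0 := sub_ne_zero.mpr (fun h => hq2 (by
    rw [sq]; nth_rewrite 2 [h]; exact mul_inv_cancel₀ hq))
  have e1 : ∀ c : ℕ, q ^ ((l : ℤ) - 2 * (c : ℤ)) = q ^ l * ((q ^ 2)⁻¹) ^ c := fun c => by
    rw [zpow_sub₀ hq, zpow_natCast, show (2 * (c : ℤ)) = ((2 * c : ℕ) : ℤ) by push_cast; ring,
      zpow_natCast, pow_mul, div_eq_mul_inv, inv_pow]
  have e2 : ∀ c : ℕ, q ^ (-((l : ℤ) - 2 * (c : ℤ))) = (q ^ l)⁻¹ * (q ^ 2) ^ c := fun c => by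
    rw [zpow_neg, e1, mul_inv, inv_pow, inv_inv]
  have eQ : q ^ ((l : ℤ) - 2 * (t : ℤ) - 1) = q ^ l / ((q ^ 2) ^ t * q) := by
    rw [zpow_sub₀ hq, zpow_sub₀ hq, zpow_one, zpow_natCast,
      show (2 * (t : ℤ)) = ((2 * t : ℕ) : ℤ) by push_cast; ring, zpow_natCast, pow_mul, div_div]
  have e3 : ∀ j : ℕ, q ^ (2 * j) = (q ^ 2) ^ j := fun j => pow_mul q 2 j
  have eRfrac : (q ^ (-(2 * ((t : ℤ) + 1))) - 1) / (q ^ (-2 : ℤ) - 1)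
      = ((q ^ 2) ^ (t + 1) - 1) / ((q ^ 2) ^ t * (q ^ 2 - 1)) := by
    rw [show (-(2 * ((t : ℤ) + 1))) = -((2 * (t + 1) : ℕ) : ℤ) by push_cast; ring, zpow_neg,
      zpow_natCast, pow_mul, show ((-2 : ℤ)) = -((2 : ℕ) : ℤ) by norm_num, zpow_neg, zpow_natCast]
    have hx1' : ((q ^ 2)⁻¹ : K) - 1 ≠ 0 := sub_ne_zero.mpr (fun h => hq2 (inv_eq_one.mp h))
    rw [div_eq_div_iff hx1' (mul_ne_zero hXt hy1')]
    field_simp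
    ring
  have hsum : ∀ (A B D Q x y : K), ∑ c ∈ Finset.range (t + 1), ((A * x ^ c - B * y ^ c) / D) * Q
      = ((A * ∑ c ∈ Finset.range (t + 1), x ^ c - B * ∑ c ∈ Finset.range (t + 1), y ^ c) / D) * Q := by
    intro A B D Q x y
    rw [← Finset.sum_mul, ← Finset.sum_div, Finset.sum_sub_distrib, ← Finset.mul_sum,
      ← Finset.mul_sum]
  have hinvgeom : ∑ c ∈ Finset.range (t + 1), ((q ^ 2)⁻¹) ^ c
      = (∑ c ∈ Finset.range (t + 1), (q ^ 2) ^ c) / (q ^ 2) ^ t := by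
    rw [eq_div_iff hXt, Finset.sum_mul,
      ← Finset.sum_range_reflect (fun c => (q ^ 2) ^ c) (t + 1)]
    refine Finset.sum_congr rfl fun c hc => ?_
    rw [Finset.mem_range, Nat.lt_succ_iff] at hc
    rw [inv_pow, Nat.succ_sub_one, pow_sub₀ _ hy0 hc]
    ring
  rw [eRfrac]
  simp only [e1, e2, eQ, e3]
  rw [hsum, hinvgeom, geom_sum_eq hq2, geom_sum_eq hq2, pow_sub₀ _ hy0 (le_of_lt ht)]
  rw [div_mul_div_comm, div_mul_div_comm,
    div_eq_div_iff (mul_ne_zero hqq (mul_ne_zero hXt hq))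
      (mul_ne_zero (mul_ne_zero hXt hy1') hy1')]
  field_simp
  ring


/-- Corollary 3.10 of the paper (graded dimension of the cyclotomic nilHecke algebra
`H^{(0)}_{ℓ,n}`), as a pure `q`-identity (0-based indexing, `[m] = (q^m − q^{−m})/(q − q⁻¹)`):
`Σ_{w ∈ S_n} ∏_{t} [ℓ − 2|J_w^{<t}|]·q^{ℓ−2t−1}
  = (∏_{k=1}^n (q^{−2k} − 1)/(q^{−2} − 1)) · (∏_{t=0}^{n-1} Σ_{j=0}^{ℓ−t−1} q^{2j})`. -/
theorem stmt8 {K : Type*} [Field K] (q : K) (hq : q ≠ 0) (hq2 : q ^ 2 ≠ 1)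
    (l n : ℕ) (hn : 1 ≤ n) (hl : n ≤ l) :
    ∑ w : Equiv.Perm (Fin n), ∏ t : Fin n,
        ((q ^ ((l : ℤ) - 2 * ((Finset.univ.filter (fun j => j < t ∧ w j < w t)).card : ℤ))
            - q ^ (-((l : ℤ) - 2 * ((Finset.univ.filter (fun j => j < t ∧ w j < w t)).card : ℤ))))
          / (q - q⁻¹))
        * q ^ ((l : ℤ) - 2 * ((t : ℕ) : ℤ) - 1)
      = (∏ k ∈ Finset.range n, (q ^ (-(2 * ((k : ℤ) + 1))) - 1) / (q ^ (-2 : ℤ) - 1))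
        * ∏ t ∈ Finset.range n, ∑ j ∈ Finset.range (l - t), q ^ (2 * j) := by
  calc ∑ w : Equiv.Perm (Fin n), ∏ t : Fin n,
        ((q ^ ((l : ℤ) - 2 * ((Finset.univ.filter (fun j => j < t ∧ w j < w t)).card : ℤ))
            - q ^ (-((l : ℤ) - 2 * ((Finset.univ.filter (fun j => j < t ∧ w j < w t)).card : ℤ))))
          / (q - q⁻¹))
        * q ^ ((l : ℤ) - 2 * ((t : ℕ) : ℤ) - 1)
      = ∏ t ∈ Finset.range n, ∑ c ∈ Finset.range (t + 1),
          ((q ^ ((l : ℤ) - 2 * (c : ℤ)) - q ^ (-((l : ℤ) - 2 * (c : ℤ)))) / (q - q⁻¹))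
            * q ^ ((l : ℤ) - 2 * (t : ℤ) - 1) :=
        nh_key (fun t c =>
          ((q ^ ((l : ℤ) - 2 * (c : ℤ)) - q ^ (-((l : ℤ) - 2 * (c : ℤ)))) / (q - q⁻¹))
            * q ^ ((l : ℤ) - 2 * (t : ℤ) - 1)) n
    _ = _ := by
        rw [← Finset.prod_mul_distrib]
        exact Finset.prod_congr rfl fun t ht =>
          nh_term q hq hq2 l t (lt_of_lt_of_le (Finset.mem_range.mp ht) hl)
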